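/- Let n and ℓ be integers with 4 ≤ ℓ ≤ n−2, let z : ZMod n → ℝ be injective, and let τ ∈ Perm(ZMod n) be the transposition exchanging 1 and ℓ. Then the following identity holds: u_{{1,ℓ−1}}(z ∘ τ) = − u_{{1,ℓ−1}}(z) · ∏_{e ∈ E, e crosses {1,ℓ−1}} u_e(z)^{−1}, where the product is over all chords crossing {1, ℓ−1}, i.e. all chords {k,j} with k ∈ {ℓ, ℓ+1, …, n−1, 0} and j ∈ {2, …, ℓ−2}. (This is the row v_{ℓ−1 ℓ} ↦ −u_{1 ℓ−1} ∏_{kj ≁ 1 ℓ−1} u_{kj}^{−1} of the monomial map φ_{(1ℓ)}.) -/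

import Mathlib

namespace M0n

/-- `{i, j}` is a chord of the `n`-gon: `j ∉ {i-1, i, i+1}`. -/
def IsChord (n : ℕ) (p : Sym2 (ZMod n)) : Prop :=
  ∀ i j : ZMod n, p = s(i, j) → j ≠ i - 1 ∧ j ≠ i ∧ j ≠ i + 1

instance (n : ℕ) [NeZero n] : DecidablePred (IsChord n) := fun p =>
  inferInstanceAs (Decidable (∀ i j : ZMod n, p = s(i, j) → j ≠ i - 1 ∧ j ≠ i ∧ j ≠ i + 1))

/-- The finite set `E` of chords of the `n`-gon. -/
def chords (n : ℕ) [NeZero n] : Finset (Sym2 (ZMod n)) :=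
  Finset.univ.filter (IsChord n)

/-- `x` lies in the cyclic open interval `{i+1, …, j-1}` from `i` to `j`. -/
def CycBtw {n : ℕ} (i x j : ZMod n) : Prop :=
  0 < (x - i).val ∧ (x - i).val < (j - i).val

instance {n : ℕ} (i x j : ZMod n) : Decidable (CycBtw i x j) :=
  inferInstanceAs (Decidable (0 < (x - i).val ∧ (x - i).val < (j - i).val))

/-- Two chords cross: exactly one endpoint of `q` lies in the cyclic open interval
from `i` to `j`, for every ordered representation `(i, j)` of `p`. -/
def Crosses (n : ℕ) (p q : Sym2 (ZMod n)) : Prop :=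
  ∀ i j k l : ZMod n, p = s(i, j) → q = s(k, l) → Xor (CycBtw i k j) (CycBtw i l j)

instance (n : ℕ) [NeZero n] (p q : Sym2 (ZMod n)) : Decidable (Crosses n p q) :=
  inferInstanceAs (Decidable (∀ i j k l : ZMod n,
    p = s(i, j) → q = s(k, l) → Xor (CycBtw i k j) (CycBtw i l j)))

/-- The dihedral coordinate (cross-ratio)
`u_{ij}(z) = ((z i - z (j+1)) (z (i+1) - z j)) / ((z i - z j) (z (i+1) - z (j+1)))`,
well defined on unordered pairs. -/
def u {n : ℕ} {K : Type*} [Field K] (z : ZMod n → K) : Sym2 (ZMod n) → K :=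
  Sym2.lift ⟨fun i j =>
    ((z i - z (j + 1)) * (z (i + 1) - z j)) / ((z i - z j) * (z (i + 1) - z (j + 1))), by
      intro i j
      have h1 : (z i - z (j + 1)) * (z (i + 1) - z j)
          = (z j - z (i + 1)) * (z (j + 1) - z i) := by ring
      have h2 : (z i - z j) * (z (i + 1) - z (j + 1))
          = (z j - z i) * (z (j + 1) - z (i + 1)) := by ring
      dsimp only
      rw [h1, h2]⟩

/-- The cyclic interval `{a, a+1, …, a+m-1}` in `ZMod n`. -/
def cycInt {n : ℕ} (a : ZMod n) (m : ℕ) : Finset (ZMod n) :=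
  (Finset.range m).image fun t : ℕ => a + (t : ZMod n)

/-- A partition of `ZMod n` into four nonempty cyclic intervals `A, B, C, D`
appearing in this cyclic order. -/
structure CyclicFourPartition (n : ℕ) where
  a : ZMod n
  p : ℕ
  q : ℕ
  r : ℕ
  t : ℕ
  hp : 0 < p
  hq : 0 < q
  hr : 0 < r
  ht : 0 < t
  hsum : p + q + r + t = n

namespace CyclicFourPartition

variable {n : ℕ} (P : CyclicFourPartition n)

def A : Finset (ZMod n) := cycInt P.a P.p
def B : Finset (ZMod n) := cycInt (P.a + (P.p : ZMod n)) P.q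
def C : Finset (ZMod n) := cycInt (P.a + (P.p : ZMod n) + (P.q : ZMod n)) P.r
def D : Finset (ZMod n) := cycInt (P.a + (P.p : ZMod n) + (P.q : ZMod n) + (P.r : ZMod n)) P.t

end CyclicFourPartition

/-- A sign pattern is consistent if it does not contradict any extended u-relation:
for every cyclic 4-partition `(A,B,C,D)`, one of the two products of signs is `1`. -/
def Consistent (n : ℕ) (s : Sym2 (ZMod n) → ℤ) : Prop :=
  ∀ P : CyclicFourPartition n,
    (∏ x ∈ P.A, ∏ y ∈ P.C, s s(x, y)) = 1 ∨ (∏ x ∈ P.B, ∏ y ∈ P.D, s s(x, y)) = 1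

/-- A sign pattern is realizable if it is the sign vector of the dihedral coordinates
of some injective real configuration. -/
def Realizable (n : ℕ) [NeZero n] (s : Sym2 (ZMod n) → ℤ) : Prop :=
  ∃ z : ZMod n → ℝ, Function.Injective z ∧ ∀ e ∈ chords n, Real.sign (u z e) = (s e : ℝ)

/-- The length of a chord `{i,j}`: `min (d, n - d)` where `d = (j - i).val`. -/
def chordLength (n : ℕ) (p : Sym2 (ZMod n)) : ℕ :=
  Sym2.lift ⟨fun i j => min (j - i).val (i - j).val, fun _ _ => min_comm _ _⟩ p

/-- `Neg z`: the number of negative chords of a real configuration. -/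
noncomputable def negCount (n : ℕ) [NeZero n] (z : ZMod n → ℝ) : ℕ :=
  Set.ncard {e : Sym2 (ZMod n) | e ∈ chords n ∧ u z e < 0}

/-- The set of real points of `M_{0,n}` in its dihedral embedding:
nowhere-zero real solutions of all primitive u-relations in `ℝ^E`. -/
def Vset (n : ℕ) [NeZero n] : Set ({e : Sym2 (ZMod n) // e ∈ chords n} → ℝ) :=
  {w | (∀ c, w c ≠ 0) ∧ ∀ c,
    w c + ∏ e ∈ Finset.univ.filter
        (fun e : {e : Sym2 (ZMod n) // e ∈ chords n} => Crosses n e.1 c.1), w e = 1}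

/-- The part `M_{0,n}(ℝ_s)` of `V` in the open orthant given by the sign pattern `s`. -/
def VsSet (n : ℕ) [NeZero n] (s : Sym2 (ZMod n) → ℤ) :
    Set ({e : Sym2 (ZMod n) // e ∈ chords n} → ℝ) :=
  {w ∈ Vset n | ∀ c : {e : Sym2 (ZMod n) // e ∈ chords n}, Real.sign (w c) = (s c.1 : ℝ)}


private lemma aux_val_cast2 {n : ℕ} [NeZero n] (k : ℕ) (hk : k < 2 * n) :
    ((k : ZMod n)).val = if k < n then k else k - n := by
  rw [ZMod.val_natCast]
  split_ifs with h
  · exact Nat.mod_eq_of_lt h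
  · rw [Nat.mod_eq_sub_mod (by omega), Nat.mod_eq_of_lt (by omega)]

private lemma aux_val_sub {n : ℕ} [NeZero n] (a b : ZMod n) :
    (a - b).val = if b.val ≤ a.val then a.val - b.val else a.val + n - b.val := by
  have hb := ZMod.val_lt b
  have ha := ZMod.val_lt a
  have key : (a - b) = ((a.val + (n - b.val) : ℕ) : ZMod n) := by
    push_cast [Nat.cast_sub hb.le]
    simp [ZMod.natCast_val, ZMod.natCast_self, sub_eq_add_neg]
  rw [key, ZMod.val_natCast]
  split_ifs with h
  · rw [Nat.mod_eq_sub_mod (by omega), Nat.mod_eq_of_lt (by omega)]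
    omega
  · rw [Nat.mod_eq_of_lt (by omega)]
    omega

private lemma aux_u_mk {n : ℕ} {K : Type*} [Field K] (z : ZMod n → K) (i j : ZMod n) :
    u z s(i, j)
      = ((z i - z (j + 1)) * (z (i + 1) - z j)) / ((z i - z j) * (z (i + 1) - z (j + 1))) := by
  simp [u]

private lemma aux_prod_Ico_div (f : ℕ → ℝ) (a b : ℕ) (hab : a ≤ b)
    (hf : ∀ k, a ≤ k → k ≤ b → f k ≠ 0) :
    ∏ k ∈ Finset.Ico a b, f (k + 1) / f k = f b / f a := by
  induction b, hab using Nat.le_induction with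
  | base => simp [div_self (hf a le_rfl le_rfl)]
  | succ b hab ih =>
    rw [Finset.prod_Ico_succ_top (by omega), ih (fun k hk hk' => hf k hk (by omega))]
    rw [div_mul_div_comm, mul_comm (f b) (f (b + 1)),
      mul_div_mul_right _ _ (hf b (by omega) (by omega))]

set_option maxHeartbeats 3200000 in
/-- The row `v_{ℓ-1 ℓ} ↦ -u_{1 ℓ-1} ∏_{kj ≁ 1 ℓ-1} u_{kj}⁻¹` of the
monomial map `φ_{(1ℓ)}`, as an identity of functions of the configuration `z`. -/
theorem monomial_map_row_ellm1_ell (n ℓ : ℕ) [NeZero n] (hl4 : 4 ≤ ℓ) (hln : ℓ ≤ n - 2)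
    (z : ZMod n → ℝ) (hz : Function.Injective z) :
    u (fun k => z (Equiv.swap (1 : ZMod n) (ℓ : ZMod n) k))
        s((1 : ZMod n), (ℓ : ZMod n) - 1)
      = - u z s((1 : ZMod n), (ℓ : ZMod n) - 1) *
          ∏ e ∈ (chords n).filter
            (fun e => Crosses n e s((1 : ZMod n), (ℓ : ZMod n) - 1)), (u z e)⁻¹ := by
  have hn1 : 0 < n := Nat.pos_of_ne_zero (NeZero.ne n)
  have hn6 : 6 ≤ n := by omega
  have hm : ((ℓ : ZMod n)) - 1 = ((ℓ - 1 : ℕ) : ZMod n) := by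
    rw [Nat.cast_sub (by omega : 1 ≤ ℓ)]; push_cast; ring
  rw [hm]
  have h1c : (1 : ZMod n) = ((1 : ℕ) : ZMod n) := by norm_num
  have hv1 : (1 : ZMod n).val = 1 := by rw [h1c]; exact ZMod.val_cast_of_lt (by omega)
  have hvl1 : ((ℓ - 1 : ℕ) : ZMod n).val = ℓ - 1 := ZMod.val_cast_of_lt (by omega)
  have hvl : ((ℓ : ℕ) : ZMod n).val = ℓ := ZMod.val_cast_of_lt (by omega)
  have hv2 : ((2 : ℕ) : ZMod n).val = 2 := ZMod.val_cast_of_lt (by omega)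
  have hvne : ∀ x y : ZMod n, x.val ≠ y.val → x ≠ y := fun x y h hxy => h (by rw [hxy])
  have hzq : ∀ x y : ℕ, x < 2*n → y < 2*n → ¬(x = y ∨ x = y + n ∨ y = x + n) →
      z ↑x - z ↑y ≠ 0 := by
    intro x y hx hy hxy h0
    refine hvne (↑x) (↑y) ?_ (hz (sub_eq_zero.mp h0))
    rw [aux_val_cast2 x hx, aux_val_cast2 y hy]
    split_ifs <;> omega
  have hcross : ∀ a b : ZMod n,
      Crosses n s(a, b) s((1:ZMod n), ((ℓ-1:ℕ) : ZMod n)) ↔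
        (((a.val = 0 ∨ ℓ ≤ a.val) ∧ 2 ≤ b.val ∧ b.val ≤ ℓ - 2) ∨
         ((b.val = 0 ∨ ℓ ≤ b.val) ∧ 2 ≤ a.val ∧ a.val ≤ ℓ - 2)) := by
    intro a b
    have ha := ZMod.val_lt a
    have hb := ZMod.val_lt b
    constructor
    · intro h
      have h1 := h a b 1 (((ℓ-1:ℕ)) : ZMod n) rfl rfl
      have h2 := h b a 1 (((ℓ-1:ℕ)) : ZMod n) (Sym2.eq_swap) rfl
      simp only [CycBtw, Xor, aux_val_sub, hv1, hvl1] at h1 h2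
      split_ifs at h1 h2 <;> omega
    · intro hv i j k l hp hq
      rw [Sym2.eq_iff] at hp hq
      obtain ⟨hi, hj⟩ | ⟨hi, hj⟩ := hp <;> obtain ⟨hk, hl⟩ | ⟨hk, hl⟩ := hq <;>
          subst hi <;> subst hj <;> subst hk <;> subst hl <;>
        · simp only [CycBtw, Xor, aux_val_sub, hv1, hvl1]
          split_ifs <;> omega
  have hset : (chords n).filter (fun e => Crosses n e s((1:ZMod n), ((ℓ-1:ℕ):ZMod n)))
      = ((Finset.Ico ℓ (n+1)) ×ˢ (Finset.Ico 2 (ℓ-1))).image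
          (fun p : ℕ × ℕ => s(((p.1 : ℕ) : ZMod n), ((p.2 : ℕ) : ZMod n))) := by
    ext e
    induction e using Sym2.ind with
    | _ a b =>
      have ha := ZMod.val_lt a
      have hb := ZMod.val_lt b
      simp only [Finset.mem_filter, Finset.mem_image, Finset.mem_product, Finset.mem_Ico,
        chords, Finset.mem_univ, true_and]
      constructor
      · rintro ⟨-, hcr⟩
        rw [hcross a b] at hcr
        have hvala : ((a.val : ℕ) : ZMod n) = a := by simp [ZMod.natCast_val, ZMod.cast_id]
        have hvalb : ((b.val : ℕ) : ZMod n) = b := by simp [ZMod.natCast_val, ZMod.cast_id]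
        obtain ⟨h1, h2, h3⟩ | ⟨h1, h2, h3⟩ := hcr
        · refine ⟨⟨if a.val = 0 then n else a.val, b.val⟩, ⟨⟨?_, ?_⟩, ?_, ?_⟩, ?_⟩
          · split_ifs <;> omega
          · split_ifs <;> omega
          · omega
          · omega
          · have hka : (((if a.val = 0 then n else a.val) : ℕ) : ZMod n) = a := by
              split_ifs with h0
              · rw [ZMod.natCast_self]
                exact ((ZMod.val_eq_zero a).mp h0).symm
              · exact hvala
            dsimp only
            rw [hka, hvalb]
        · refine ⟨⟨if b.val = 0 then n else b.val, a.val⟩, ⟨⟨?_, ?_⟩, ?_, ?_⟩, ?_⟩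
          · split_ifs <;> omega
          · split_ifs <;> omega
          · omega
          · omega
          · have hkb : (((if b.val = 0 then n else b.val) : ℕ) : ZMod n) = b := by
              split_ifs with h0
              · rw [ZMod.natCast_self]
                exact ((ZMod.val_eq_zero b).mp h0).symm
              · exact hvalb
            dsimp only
            rw [hkb, hvala]
            exact Sym2.eq_swap
      · rintro ⟨⟨k, j⟩, ⟨⟨hk1, hk2⟩, hj1, hj2⟩, heq⟩
        rw [← heq]
        have hvk : ((k : ZMod n)).val = if k < n then k else k - n := aux_val_cast2 k (by omega)
        have hvj : ((j : ZMod n)).val = j := ZMod.val_cast_of_lt (by omega)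
        have e1 : ((k : ZMod n) + 1) = ((k+1 : ℕ) : ZMod n) := by push_cast; ring
        have e2 : ((j : ZMod n) + 1) = ((j+1 : ℕ) : ZMod n) := by push_cast; ring
        have hvk1 : (((k+1 : ℕ)) : ZMod n).val = if k+1 < n then k+1 else k+1-n :=
          aux_val_cast2 (k+1) (by omega)
        have hvj1 : (((j+1 : ℕ)) : ZMod n).val = j+1 := ZMod.val_cast_of_lt (by omega)
        constructor
        · intro i' j' hp
          rw [Sym2.eq_iff] at hp
          obtain ⟨hi, hj'⟩ | ⟨hi, hj'⟩ := hp <;> subst hi <;> subst hj' <;>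
            refine ⟨hvne _ _ ?_, hvne _ _ ?_, hvne _ _ ?_⟩ <;>
            · simp only [e1, e2, aux_val_sub, hv1, hvk, hvj, hvk1, hvj1]
              split_ifs <;> omega
        · rw [hcross]
          refine Or.inl ⟨?_, ?_, ?_⟩
          · rw [hvk]; split_ifs <;> omega
          · rw [hvj]; omega
          · rw [hvj]; omega
  have hinj : ∀ p ∈ (Finset.Ico ℓ (n+1)) ×ˢ (Finset.Ico 2 (ℓ-1)),
      ∀ q ∈ (Finset.Ico ℓ (n+1)) ×ˢ (Finset.Ico 2 (ℓ-1)),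
      (fun p : ℕ × ℕ => s(((p.1 : ℕ) : ZMod n), ((p.2 : ℕ) : ZMod n))) p
        = (fun p : ℕ × ℕ => s(((p.1 : ℕ) : ZMod n), ((p.2 : ℕ) : ZMod n))) q → p = q := by
    rintro ⟨k, j⟩ hp ⟨k', j'⟩ hq h
    simp only [Finset.mem_product, Finset.mem_Ico] at hp hq
    simp only [Sym2.eq_iff] at h
    obtain ⟨h1, h2⟩ | ⟨h1, h2⟩ := h
    · have e1 := congrArg ZMod.val h1
      have e2 := congrArg ZMod.val h2
      rw [aux_val_cast2 k (by omega), aux_val_cast2 k' (by omega)] at e1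
      rw [ZMod.val_cast_of_lt (show j < n by omega),
        ZMod.val_cast_of_lt (show j' < n by omega)] at e2
      have hkk : k = k' := by split_ifs at e1 <;> omega
      simp only [Prod.mk.injEq]
      exact ⟨hkk, e2⟩
    · have e1 := congrArg ZMod.val h1
      rw [aux_val_cast2 k (by omega), ZMod.val_cast_of_lt (show j' < n by omega)] at e1
      split_ifs at e1 <;> omega
  have hinner : ∀ k ∈ Finset.Ico ℓ (n+1),
      (∏ j ∈ Finset.Ico 2 (ℓ-1), (u z s(((k : ℕ) : ZMod n), ((j : ℕ) : ZMod n)))⁻¹)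
        = (fun x : ℕ => (z ↑x - z ↑(ℓ-1)) / (z ↑x - z ((2:ℕ) : ZMod n))) (k+1)
          / (fun x : ℕ => (z ↑x - z ↑(ℓ-1)) / (z ↑x - z ((2:ℕ) : ZMod n))) k := by
    intro k hk
    rw [Finset.mem_Ico] at hk
    have hfact : ∀ j ∈ Finset.Ico 2 (ℓ-1),
        (u z s(((k : ℕ) : ZMod n), ((j : ℕ) : ZMod n)))⁻¹
          = (fun x : ℕ => (z ↑(k+1) - z ↑x) / (z ↑k - z ↑x)) (j+1)
            / (fun x : ℕ => (z ↑(k+1) - z ↑x) / (z ↑k - z ↑x)) j := by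
      intro j hj
      rw [Finset.mem_Ico] at hj
      have e1 : ((j : ZMod n) + 1) = ((j+1 : ℕ) : ZMod n) := by push_cast; ring
      have e2 : ((k : ZMod n) + 1) = ((k+1 : ℕ) : ZMod n) := by push_cast; ring
      have d1 : z ↑k - z ↑j ≠ 0 := hzq k j (by omega) (by omega) (by omega)
      have d2 : z ↑k - z ↑(j+1) ≠ 0 := hzq k (j+1) (by omega) (by omega) (by omega)
      have d3 : z ↑(k+1) - z ↑j ≠ 0 := hzq (k+1) j (by omega) (by omega) (by omega)
      have d4 : z ↑(k+1) - z ↑(j+1) ≠ 0 := hzq (k+1) (j+1) (by omega) (by omega) (by omega)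
      rw [aux_u_mk, e1, e2]
      field_simp
    rw [Finset.prod_congr rfl hfact,
      aux_prod_Ico_div _ 2 (ℓ-1) (by omega)
        (fun j hj1 hj2 => div_ne_zero (hzq (k+1) j (by omega) (by omega) (by omega))
          (hzq k j (by omega) (by omega) (by omega)))]
    have d1 : z ↑k - z ((2:ℕ) : ZMod n) ≠ 0 := hzq k 2 (by omega) (by omega) (by omega)
    have d2 : z ↑k - z ↑(ℓ-1) ≠ 0 := hzq k (ℓ-1) (by omega) (by omega) (by omega)
    have d3 : z ↑(k+1) - z ((2:ℕ) : ZMod n) ≠ 0 := hzq (k+1) 2 (by omega) (by omega) (by omega)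
    have d4 : z ↑(k+1) - z ↑(ℓ-1) ≠ 0 := hzq (k+1) (ℓ-1) (by omega) (by omega) (by omega)
    dsimp only
    field_simp
  have hn1c : ((n+1 : ℕ) : ZMod n) = ((1 : ℕ) : ZMod n) := by
    push_cast [ZMod.natCast_self]
    ring
  have hQ : (∏ e ∈ (chords n).filter
        (fun e => Crosses n e s((1:ZMod n), ((ℓ-1:ℕ):ZMod n))), (u z e)⁻¹)
      = ((z ((1:ℕ) : ZMod n) - z ↑(ℓ-1)) / (z ((1:ℕ) : ZMod n) - z ((2:ℕ) : ZMod n)))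
        / ((z ↑ℓ - z ↑(ℓ-1)) / (z ↑ℓ - z ((2:ℕ) : ZMod n))) := by
    rw [hset, Finset.prod_image hinj, Finset.prod_product,
      Finset.prod_congr rfl hinner,
      aux_prod_Ico_div _ ℓ (n+1) (by omega)
        (fun k hk1 hk2 => div_ne_zero (hzq k (ℓ-1) (by omega) (by omega) (by omega))
          (hzq k 2 (by omega) (by omega) (by omega)))]
    simp only [hn1c]
  rw [hQ]
  have hml : ((ℓ-1 : ℕ) : ZMod n) + 1 = (ℓ : ZMod n) := by rw [← hm]; ring
  have h11 : (1 : ZMod n) + 1 = ((2 : ℕ) : ZMod n) := by push_cast; ring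
  have hm1 : ((ℓ-1 : ℕ) : ZMod n) ≠ 1 := hvne _ _ (by rw [hvl1, hv1]; omega)
  have hm2 : ((ℓ-1 : ℕ) : ZMod n) ≠ (ℓ : ZMod n) := hvne _ _ (by rw [hvl1, hvl]; omega)
  have h21 : ((2 : ℕ) : ZMod n) ≠ 1 := hvne _ _ (by rw [hv2, hv1]; omega)
  have h2l : ((2 : ℕ) : ZMod n) ≠ (ℓ : ZMod n) := hvne _ _ (by rw [hv2, hvl]; omega)
  rw [aux_u_mk, aux_u_mk, hml, h11, Equiv.swap_apply_left, Equiv.swap_apply_right,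
    Equiv.swap_apply_of_ne_of_ne hm1 hm2, Equiv.swap_apply_of_ne_of_ne h21 h2l, h1c]
  have d1 : z ((1:ℕ) : ZMod n) - z ↑(ℓ-1) ≠ 0 := hzq 1 (ℓ-1) (by omega) (by omega) (by omega)
  have d2 : z ((2:ℕ) : ZMod n) - z ↑ℓ ≠ 0 := hzq 2 ℓ (by omega) (by omega) (by omega)
  have d3 : z ↑ℓ - z ↑(ℓ-1) ≠ 0 := hzq ℓ (ℓ-1) (by omega) (by omega) (by omega)
  have d4 : z ((2:ℕ) : ZMod n) - z ((1:ℕ) : ZMod n) ≠ 0 := hzq 2 1 (by omega) (by omega) (by omega)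
  have d5 : z ↑ℓ - z ((2:ℕ) : ZMod n) ≠ 0 := hzq ℓ 2 (by omega) (by omega) (by omega)
  have d6 : z ((1:ℕ) : ZMod n) - z ((2:ℕ) : ZMod n) ≠ 0 := hzq 1 2 (by omega) (by omega) (by omega)
  have d7 : z ((1:ℕ) : ZMod n) - z ↑ℓ ≠ 0 := hzq 1 ℓ (by omega) (by omega) (by omega)
  have d8 : z ((2:ℕ) : ZMod n) - z ↑(ℓ-1) ≠ 0 := hzq 2 (ℓ-1) (by omega) (by omega) (by omega)
  set A := z ((1:ℕ) : ZMod n) with hA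
  set B := z ((2:ℕ) : ZMod n) with hB
  set C := z (((ℓ-1:ℕ)) : ZMod n) with hC
  set D := z ((ℓ : ℕ) : ZMod n) with hD
  field_simp
  ring


end M0n
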